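/- Concentration under global mean reversion: Let X_n be an adapted process bounded in [-σ/2, σ/2] with S_n = ∑_{i=1}^n X_i satisfying E[X_{n+1}|F_n]·S_n ≤ 0 for all n. If nσ² > 2, then with probability at least 1-δ, |S_n| ≤ sqrt(2 n σ² log(2n/δ)). -/

import Mathlib

open MeasureTheory Finset Real

lemma aux_integrable_bdd {Ω : Type*} {m : MeasurableSpace Ω} {ℙ : Measure Ω} [IsProbabilityMeasure ℙ]
    {f : Ω → ℝ} (hf : AEStronglyMeasurable f ℙ) {C : ℝ} (h : ∀ᵐ ω ∂ℙ, |f ω| ≤ C) :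
    Integrable f ℙ :=
  (integrable_const C).mono' hf (by simpa [Real.norm_eq_abs] using h)

lemma aux_exp_quad {x : ℝ} (hx : |x| ≤ 1) : exp x ≤ 1 + x + (3/4) * x^2 := by
  have h := Real.exp_bound hx (by norm_num : 0 < 2)
  simp [Finset.sum_range_succ, Nat.factorial] at h
  have := abs_sub_le_iff.1 h
  nlinarith [this.1, sq_abs x]

lemma oneSide {Ω : Type*} {m : MeasurableSpace Ω} (ℙ : Measure Ω) [IsProbabilityMeasure ℙ]
    (ℱ : Filtration ℕ m) (c : ℝ) (hc : 0 < c)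
    (X : ℕ → Ω → ℝ) (hadapted : Adapted ℱ X)
    (hbdd : ∀ n, ∀ᵐ ω ∂ℙ, |X n ω| ≤ c)
    (S : ℕ → Ω → ℝ) (hS : ∀ n ω, S n ω = ∑ i ∈ Finset.Icc 1 n, X i ω)
    (hmr : ∀ n, ∀ᵐ ω ∂ℙ, (ℙ[X (n + 1) | ℱ n]) ω * S n ω ≤ 0)
    (l t : ℝ) (hl : 0 ≤ l) (hlc : l * c ≤ 1) (n : ℕ) :
    ℙ {ω | t ≤ S n ω} ≤
      ENNReal.ofReal (exp (-l * t) * ((1 + (3/4) * (l*c)^2)^n * (1 + l*c*n))) := by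
  set K : ℝ := (3/4) * (l*c)^2 with hK
  have hK0 : 0 ≤ K := by positivity
  -- measurability of S k w.r.t. ℱ k
  have hSmeas : ∀ k, StronglyMeasurable[ℱ k] (S k) := by
    intro k
    have : S k = fun ω => ∑ i ∈ Finset.Icc 1 k, X i ω := funext fun ω => hS k ω
    rw [this]
    exact Finset.stronglyMeasurable_fun_sum _ fun i hi =>
      (hadapted i).stronglyMeasurable.mono (ℱ.mono (Finset.mem_Icc.1 hi).2)
  have hSm : ∀ k, AEStronglyMeasurable (S k) ℙ := fun k =>
    ((hSmeas k).mono (ℱ.le k)).aestronglyMeasurable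
  -- a.e. bound on S k
  have hSbdd : ∀ k, ∀ᵐ ω ∂ℙ, |S k ω| ≤ k * c := by
    intro k
    have h := (ae_ball_iff (Finset.Icc 1 k).countable_toSet).2
      (fun i (_ : i ∈ (Finset.Icc 1 k : Finset ℕ)) => hbdd i)
    filter_upwards [h] with ω hω
    rw [hS k ω]
    calc |∑ i ∈ Finset.Icc 1 k, X i ω| ≤ ∑ i ∈ Finset.Icc 1 k, |X i ω| :=
          Finset.abs_sum_le_sum_abs _ _
      _ ≤ ∑ i ∈ Finset.Icc 1 k, c := Finset.sum_le_sum fun i hi => hω i hi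
      _ = (k : ℝ) * c := by
          rw [Finset.sum_const, Nat.card_Icc]
          simp [nsmul_eq_mul]
  -- integrability of exp (l * S k)
  have hf_meas : ∀ k, AEStronglyMeasurable (fun ω => exp (l * S k ω)) ℙ := fun k =>
    (Real.continuous_exp.comp (continuous_const.mul continuous_id)).comp_aestronglyMeasurable (hSm k)
  have hf_bd : ∀ k, ∀ᵐ ω ∂ℙ, |exp (l * S k ω)| ≤ exp (l * (k * c)) := by
    intro k
    filter_upwards [hSbdd k] with ω hω
    rw [abs_of_pos (exp_pos _)]
    exact exp_le_exp.2 (mul_le_mul_of_nonneg_left ((abs_le.1 hω).2) hl)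
  have hf_int : ∀ k, Integrable (fun ω => exp (l * S k ω)) ℙ := fun k =>
    aux_integrable_bdd (hf_meas k) (hf_bd k)
  -- key recursion
  have hstep : ∀ k, ∫ ω, exp (l * S (k+1) ω) ∂ℙ ≤
      (1 + K) * ∫ ω, exp (l * S k ω) ∂ℙ + l * c := by
    intro k
    set f : Ω → ℝ := fun ω => exp (l * S k ω) with hf
    set g : Ω → ℝ := fun ω => exp (l * X (k+1) ω) with hg
    have hSsucc : ∀ ω, S (k+1) ω = S k ω + X (k+1) ω := by
      intro ω
      rw [hS (k+1) ω, hS k ω, Finset.sum_Icc_succ_top (Nat.succ_le_succ (Nat.zero_le k))]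
    have hXint : Integrable (X (k+1)) ℙ :=
      aux_integrable_bdd ((hadapted (k+1)).stronglyMeasurable.mono (ℱ.le _)).aestronglyMeasurable (hbdd (k+1))
    have hXm : AEStronglyMeasurable (X (k+1)) ℙ :=
      ((hadapted (k+1)).stronglyMeasurable.mono (ℱ.le _)).aestronglyMeasurable
    have hg_meas : AEStronglyMeasurable g ℙ :=
      (Real.continuous_exp.comp (continuous_const.mul continuous_id)).comp_aestronglyMeasurable hXm
    have hg_bd : ∀ᵐ ω ∂ℙ, |g ω| ≤ exp (l * c) := by
      filter_upwards [hbdd (k+1)] with ω hω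
      rw [abs_of_pos (exp_pos _)]
      exact exp_le_exp.2 (mul_le_mul_of_nonneg_left ((abs_le.1 hω).2) hl)
    have hg_int : Integrable g ℙ := aux_integrable_bdd hg_meas hg_bd
    have hfg_int : Integrable (f * g) ℙ := by
      refine aux_integrable_bdd (C := exp (l * (k * c)) * exp (l * c)) ((hf_meas k).mul hg_meas) ?_
      filter_upwards [hf_bd k, hg_bd] with ω h1 h2
      calc |f ω * g ω| = |f ω| * |g ω| := abs_mul _ _
        _ ≤ exp (l * (k * c)) * exp (l * c) :=
          mul_le_mul h1 h2 (abs_nonneg _) (le_trans (abs_nonneg _) h1)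
    -- rewrite integral
    have h0 : ∫ ω, exp (l * S (k+1) ω) ∂ℙ = ∫ ω, (f * g) ω ∂ℙ := by
      refine integral_congr_ae (Filter.Eventually.of_forall fun ω => ?_)
      simp only [Pi.mul_apply, hf, hg, hSsucc ω, mul_add, exp_add]
    have hpull := condExp_mul_of_stronglyMeasurable_left
      (m := ℱ k) (Real.continuous_exp.comp_stronglyMeasurable ((hSmeas k).const_mul l)) hfg_int hg_int
    have h1 : ∫ ω, (f * g) ω ∂ℙ = ∫ ω, f ω * (ℙ[g | ℱ k]) ω ∂ℙ := by
      rw [← integral_condExp (ℱ.le k) (f := f * g)]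
      exact integral_congr_ae hpull
    -- bound on conditional expectation of g
    have hqint : Integrable (fun ω => (1 + K) + l * X (k+1) ω) ℙ :=
      (integrable_const _).add (hXint.const_mul l)
    have hgq : g ≤ᵐ[ℙ] fun ω => (1 + K) + l * X (k+1) ω := by
      filter_upwards [hbdd (k+1)] with ω hω
      have habs : |l * X (k+1) ω| ≤ 1 := by
        rw [abs_mul, abs_of_nonneg hl]
        exact le_trans (mul_le_mul_of_nonneg_left hω hl) hlc
      have := aux_exp_quad habs
      have hsq : (l * X (k+1) ω)^2 ≤ (l * c)^2 := by
        rw [← sq_abs (l * X (k+1) ω), abs_mul, abs_of_nonneg hl]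
        have : l * |X (k+1) ω| ≤ l * c := mul_le_mul_of_nonneg_left hω hl
        exact pow_le_pow_left₀ (by positivity) this 2
      simp only [hg, hK]
      nlinarith
    have hcond_le : ∀ᵐ ω ∂ℙ, (ℙ[g | ℱ k]) ω ≤ (1 + K) + l * (ℙ[X (k+1) | ℱ k]) ω := by
      have h2 := condExp_mono hg_int hqint hgq (m := ℱ k)
      have h3 : ℙ[fun ω => (1 + K) + l * X (k+1) ω | ℱ k] =ᵐ[ℙ]
          fun ω => (1 + K) + l * (ℙ[X (k+1) | ℱ k]) ω := by
        have ha := condExp_add (m := ℱ k) (μ := ℙ) (f := fun _ => (1:ℝ) + K)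
          (g := fun ω => l * X (k+1) ω) (integrable_const ((1:ℝ) + K))
          (hXint.const_mul l)
        have hb := condExp_smul (m := ℱ k) (μ := ℙ) l (X (k+1))
        have hfg : (fun ω => (1 + K) + l * X (k+1) ω) =
            (fun _ : Ω => (1:ℝ)+K) + (fun ω => l * X (k+1) ω) := rfl
        rw [hfg]
        filter_upwards [ha, hb] with ω ha hb
        rw [ha]
        simp only [Pi.add_apply]
        rw [condExp_const (ℱ.le k)]
        have hsmul : (ℙ[fun ω => l * X (k+1) ω|ℱ k]) ω = l * (ℙ[X (k+1)|ℱ k]) ω := by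
          have hr : (fun ω => l * X (k+1) ω) = l • X (k+1) := rfl
          rw [hr, hb]; simp
        rw [hsmul]
      filter_upwards [h2, h3] with ω h2 h3
      calc (ℙ[g | ℱ k]) ω ≤ (ℙ[fun ω => (1 + K) + l * X (k+1) ω | ℱ k]) ω := h2
        _ = (1 + K) + l * (ℙ[X (k+1) | ℱ k]) ω := h3
    -- bound on |E[X|F]|
    have hcondX_le : ∀ᵐ ω ∂ℙ, (ℙ[X (k+1) | ℱ k]) ω ≤ c := by
      have h2 := condExp_mono (m := ℱ k) hXint (integrable_const c)
        (by filter_upwards [hbdd (k+1)] with ω hω; exact (abs_le.1 hω).2)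
      filter_upwards [h2] with ω h2
      calc (ℙ[X (k+1)|ℱ k]) ω ≤ (ℙ[(fun _ => c)|ℱ k]) ω := h2
        _ = c := by rw [condExp_const (ℱ.le k)]
    -- pointwise key bound
    have hkey : ∀ᵐ ω ∂ℙ, f ω * (ℙ[g | ℱ k]) ω ≤ (1 + K) * f ω + l * c := by
      filter_upwards [hcond_le, hcondX_le, hmr k] with ω h1 h2 h3
      have hfpos : 0 < f ω := exp_pos _
      have hfc : f ω * (ℙ[X (k+1) | ℱ k]) ω ≤ c := by
        rcases le_or_gt ((ℙ[X (k+1) | ℱ k]) ω) 0 with hle | hgt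
        · exact le_trans (mul_nonpos_of_nonneg_of_nonpos hfpos.le hle) hc.le
        · have hSle : S k ω ≤ 0 := by nlinarith
          have hfle : f ω ≤ 1 := by
            simp only [hf]
            calc exp (l * S k ω) ≤ exp 0 := exp_le_exp.2 (mul_nonpos_of_nonneg_of_nonpos hl hSle)
              _ = 1 := exp_zero
          nlinarith
      nlinarith [mul_le_mul_of_nonneg_left h1 hfpos.le]
    -- integrate
    have hlhs_int : Integrable (fun ω => f ω * (ℙ[g | ℱ k]) ω) ℙ :=
      (integrable_condExp (f := f * g) (m := ℱ k)).congr hpull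
    have hrhs_int : Integrable (fun ω => (1 + K) * f ω + l * c) ℙ :=
      ((hf_int k).const_mul _).add (integrable_const _)
    have h4 : ∫ ω, f ω * (ℙ[g | ℱ k]) ω ∂ℙ ≤ ∫ ω, ((1 + K) * f ω + l * c) ∂ℙ :=
      integral_mono_ae hlhs_int hrhs_int hkey
    have h5 : ∫ ω, ((1 + K) * f ω + l * c) ∂ℙ = (1 + K) * ∫ ω, f ω ∂ℙ + l * c := by
      rw [integral_add (((hf_int k)).const_mul _) (integrable_const _),
        integral_const_mul, integral_const]
      simp [hf]
    rw [h0, h1]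
    rw [h5] at h4
    exact h4
  -- mgf bound by induction
  have hmgf : ∀ k, ∫ ω, exp (l * S k ω) ∂ℙ ≤ (1 + K)^k * (1 + l*c*k) := by
    intro k
    induction k with
    | zero =>
      have : ∀ ω, S 0 ω = 0 := fun ω => by rw [hS 0 ω]; simp
      simp only [this, mul_zero, exp_zero]
      simp
    | succ k ih =>
      have hIk0 : 0 ≤ ∫ ω, exp (l * S k ω) ∂ℙ :=
        integral_nonneg fun ω => (exp_pos _).le
      have h1 := hstep k
      have h2 : (1 + K) * ∫ ω, exp (l * S k ω) ∂ℙ ≤ (1 + K) * ((1 + K)^k * (1 + l*c*k)) :=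
        mul_le_mul_of_nonneg_left ih (by linarith)
      have hpow : (1:ℝ) ≤ (1 + K)^(k+1) := one_le_pow₀ (by linarith)
      have hlc0 : 0 ≤ l * c := by positivity
      calc ∫ ω, exp (l * S (k+1) ω) ∂ℙ ≤ (1 + K) * ((1 + K)^k * (1 + l*c*k)) + l * c := by
            linarith
        _ ≤ (1 + K)^(k+1) * (1 + l*c*((k:ℝ)+1)) := by
            have hle : l*c ≤ (1+K)^(k+1)*(l*c) := le_mul_of_one_le_left hlc0 hpow
            have hp : (1+K)^(k+1) = (1+K)^k*(1+K) := pow_succ _ _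
            have heq : (1+K)*((1+K)^k*(1+l*c*(k:ℝ))) = (1+K)^(k+1)*(1+l*c*(k:ℝ)) := by
              rw [hp]; ring
            have hexp : (1+K)^(k+1)*(1+l*c*((k:ℝ)+1)) =
                (1+K)^(k+1)*(1+l*c*(k:ℝ)) + (1+K)^(k+1)*(l*c) := by ring
            linarith [hle, heq, hexp]
        _ = (1 + K)^(k+1) * (1 + l*c*((k+1:ℕ):ℝ)) := by push_cast; ring
  -- Chernoff
  have hchern := ProbabilityTheory.measure_ge_le_exp_mul_mgf (X := S n) (μ := ℙ) (t := l)
    t hl (hf_int n)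
  have hmgf_eq : ProbabilityTheory.mgf (S n) ℙ l = ∫ ω, exp (l * S n ω) ∂ℙ := rfl
  have hfin : ℙ {ω | t ≤ S n ω} ≠ ⊤ := measure_ne_top _ _
  rw [← ENNReal.ofReal_toReal hfin]
  apply ENNReal.ofReal_le_ofReal
  calc (ℙ {ω | t ≤ S n ω}).toReal ≤ exp (-l * t) * ProbabilityTheory.mgf (S n) ℙ l := hchern
    _ ≤ exp (-l * t) * ((1 + K)^n * (1 + l*c*n)) := by
        rw [hmgf_eq]
        exact mul_le_mul_of_nonneg_left (hmgf n) (exp_pos _).le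

lemma aux_Sbdd {Ω : Type*} {m : MeasurableSpace Ω} {ℙ : Measure Ω} [IsProbabilityMeasure ℙ]
    (X : ℕ → Ω → ℝ) (c : ℝ) (hbdd : ∀ n, ∀ᵐ ω ∂ℙ, |X n ω| ≤ c)
    (S : ℕ → Ω → ℝ) (hS : ∀ n ω, S n ω = ∑ i ∈ Finset.Icc 1 n, X i ω) (k : ℕ) :
    ∀ᵐ ω ∂ℙ, |S k ω| ≤ k * c := by
  have h := (ae_ball_iff (Finset.Icc 1 k).countable_toSet).2
    (fun i (_ : i ∈ (Finset.Icc 1 k : Finset ℕ)) => hbdd i)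
  filter_upwards [h] with ω hω
  rw [hS k ω]
  calc |∑ i ∈ Finset.Icc 1 k, X i ω| ≤ ∑ i ∈ Finset.Icc 1 k, |X i ω| :=
        Finset.abs_sum_le_sum_abs _ _
    _ ≤ ∑ i ∈ Finset.Icc 1 k, c := Finset.sum_le_sum fun i hi => hω i hi
    _ = (k : ℝ) * c := by rw [Finset.sum_const, Nat.card_Icc]; simp [nsmul_eq_mul]

set_option maxHeartbeats 1000000 in
theorem stmt4 {Ω : Type*} {m : MeasurableSpace Ω} (ℙ : Measure Ω) [IsProbabilityMeasure ℙ]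
    (ℱ : Filtration ℕ m) (σ : ℝ) (hσ : 0 < σ)
    (X : ℕ → Ω → ℝ) (hadapted : Adapted ℱ X)
    (hbdd : ∀ n, ∀ᵐ ω ∂ℙ, |X n ω| ≤ σ / 2)
    (S : ℕ → Ω → ℝ) (hS : ∀ n ω, S n ω = ∑ i ∈ Finset.Icc 1 n, X i ω)
    (hmr : ∀ n, ∀ᵐ ω ∂ℙ, (ℙ[X (n + 1) | ℱ n]) ω * S n ω ≤ 0)
    (δ : ℝ) (hδ : δ ∈ Set.Ioo (0:ℝ) 1) (n : ℕ) (hn : 2 < n * σ ^ 2) :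
    ℙ {ω | Real.sqrt (2 * n * σ ^ 2 * Real.log (2 * n / δ)) < |S n ω|} ≤
      ENNReal.ofReal δ := by
  obtain ⟨hδ0, hδ1⟩ := hδ
  have hn1 : 1 ≤ n := by
    rcases Nat.eq_zero_or_pos n with rfl | h
    · simp at hn; linarith [sq_nonneg σ]
    · exact h
  have hnR : (1:ℝ) ≤ (n:ℝ) := by exact_mod_cast hn1
  set L : ℝ := Real.log (2 * n / δ) with hLdef
  set t : ℝ := Real.sqrt (2 * n * σ ^ 2 * L) with htdef
  have hratio : (2:ℝ) ≤ 2 * n / δ := by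
    rw [le_div_iff₀ hδ0]; nlinarith
  have hL2 : Real.log 2 ≤ L := Real.log_le_log (by norm_num) hratio
  have hlog2 : (0.6931471803:ℝ) < Real.log 2 := Real.log_two_gt_d9
  have hL0 : 0 < L := lt_of_lt_of_le (by linarith) hL2
  by_cases hcase : (n:ℝ) / 8 ≤ L
  · -- trivial case: t exceeds the a.s. bound on |S n|
    have hae := aux_Sbdd X (σ/2) hbdd S hS n
    have ht : (n:ℝ) * (σ/2) ≤ t := by
      have h1 : ((n:ℝ) * (σ/2))^2 ≤ 2 * n * σ^2 * L := by
        nlinarith [mul_le_mul_of_nonneg_left hcase (show (0:ℝ) ≤ 2 * n * σ^2 by positivity)]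
      calc (n:ℝ) * (σ/2) = Real.sqrt (((n:ℝ)*(σ/2))^2) := (Real.sqrt_sq (by positivity)).symm
        _ ≤ t := Real.sqrt_le_sqrt h1
    have hzero : ℙ {ω | t < |S n ω|} = 0 := by
      refine measure_mono_null ?_ (ae_iff.1 hae)
      intro ω hω
      simp only [Set.mem_setOf_eq] at hω ⊢
      intro hle
      linarith
    rw [hzero]
    exact zero_le
  · push_neg at hcase
    set c : ℝ := σ / 2 with hcdef
    have hc : 0 < c := by positivity
    set l : ℝ := t / (n * σ^2) with hldef
    have harg : 0 < 2 * n * σ^2 * L := by positivity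
    have ht0 : 0 < t := Real.sqrt_pos.2 harg
    have ht2 : t^2 = 2 * n * σ^2 * L := Real.sq_sqrt harg.le
    have hl0 : 0 < l := by positivity
    have hlt : l * t = 2 * L := by
      rw [hldef]
      rw [div_mul_eq_mul_div, ← sq, ht2]
      field_simp
    have hlcsq : (l * c)^2 = L / (2 * n) := by
      rw [hldef, hcdef, mul_pow, div_pow, div_pow, ht2]
      field_simp
    have hlc14 : l * c ≤ 1/4 := by
      have h1 : (l*c)^2 ≤ (1/4:ℝ)^2 := by
        rw [hlcsq]
        rw [div_le_iff₀ (by positivity : (0:ℝ) < 2*n)]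
        nlinarith
      calc l * c = Real.sqrt ((l*c)^2) := (Real.sqrt_sq (by positivity)).symm
        _ ≤ Real.sqrt ((1/4:ℝ)^2) := Real.sqrt_le_sqrt h1
        _ = 1/4 := Real.sqrt_sq (by norm_num)
    have hlc1 : l * c ≤ 1 := le_trans hlc14 (by norm_num)
    set K : ℝ := (3/4) * (l*c)^2 with hKdef
    have hKL : (n:ℝ) * K = 3/8 * L := by
      rw [hKdef, hlcsq]; field_simp; ring
    -- the bound from oneSide is at most δ/2
    have hBound : exp (-l * t) * ((1 + K)^n * (1 + l*c*n)) ≤ δ / 2 := by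
      have e1 : (1 + K)^n ≤ exp ((3/8) * L) := by
        calc (1 + K)^n ≤ (exp K)^n := by
              apply pow_le_pow_left₀ (by positivity)
              linarith [Real.add_one_le_exp K]
          _ = exp ((n:ℝ) * K) := by rw [← Real.exp_nat_mul]
          _ = exp ((3/8) * L) := by rw [hKL]
      have e2 : 1 + l*c*(n:ℝ) ≤ 1 + (n:ℝ)/4 := by nlinarith
      have e2' : (0:ℝ) < 1 + l*c*(n:ℝ) := by positivity
      have e3 : exp (-l * t) = exp (-(2*L)) := by rw [neg_mul, hlt]
      have hexpL : exp (-L) = δ / (2*n) := by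
        rw [Real.exp_neg, hLdef, Real.exp_log (by positivity)]
        rw [inv_div]
      have e4 : exp (-(2*L)) * exp ((3/8)*L) = (δ/(2*n)) * exp (-(5/8)*L) := by
        rw [← Real.exp_add, ← hexpL, ← Real.exp_add]
        ring_nf
      have h58 : (0:ℝ) < 1 + 5/8*L := by linarith
      have e5 : exp (-(5/8*L)) ≤ 1 / (1 + 5/8*L) := by
        have h : 1 + 5/8*L ≤ exp (5/8*L) := by
          linarith [Real.add_one_le_exp (5/8*L)]
        rw [Real.exp_neg, one_div]
        exact inv_anti₀ h58 h
      have e4' : exp (-(2*L)) * exp ((3/8)*L) = (δ/(2*n)) * exp (-(5/8*L)) := by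
        rw [← hexpL, ← Real.exp_add, ← Real.exp_add]
        congr 1
        ring
      have hfin : (1+(n:ℝ)/4) ≤ (n:ℝ)*(1+5/8*L) := by nlinarith
      calc exp (-l * t) * ((1 + K)^n * (1 + l*c*(n:ℝ)))
          ≤ exp (-(2*L)) * (exp ((3/8)*L) * (1 + (n:ℝ)/4)) := by
            rw [e3]
            exact mul_le_mul_of_nonneg_left
              (mul_le_mul e1 e2 e2'.le (exp_pos _).le) (exp_pos _).le
        _ = (δ/(2*n)) * exp (-(5/8*L)) * (1 + (n:ℝ)/4) := by rw [← mul_assoc, e4']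
        _ ≤ (δ/(2*n)) * (1/(1 + 5/8*L)) * (1 + (n:ℝ)/4) := by
            have hd : (0:ℝ) ≤ δ/(2*n) := by positivity
            have hq : (0:ℝ) ≤ 1 + (n:ℝ)/4 := by positivity
            exact mul_le_mul_of_nonneg_right (mul_le_mul_of_nonneg_left e5 hd) hq
        _ ≤ δ / 2 := by
            rw [div_mul_eq_mul_div, mul_one_div, div_div, div_mul_eq_mul_div,
              div_le_div_iff₀ (by positivity) (by norm_num)]
            nlinarith [mul_le_mul_of_nonneg_left hfin hδ0.le]
    -- apply oneSide to X and -X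
    have hP1 : ℙ {ω | t ≤ S n ω} ≤ ENNReal.ofReal (δ/2) := by
      refine le_trans (oneSide ℙ ℱ c hc X hadapted hbdd S hS hmr l t hl0.le hlc1 n) ?_
      exact ENNReal.ofReal_le_ofReal hBound
    have hP2 : ℙ {ω | t ≤ -(S n ω)} ≤ ENNReal.ofReal (δ/2) := by
      have hmr' : ∀ k, ∀ᵐ ω ∂ℙ, (ℙ[(fun ω => -X (k+1) ω) | ℱ k]) ω * (-(S k ω)) ≤ 0 := by
        intro k
        have hneg := condExp_neg (μ := ℙ) (m := ℱ k) (X (k+1))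
        filter_upwards [hmr k, hneg] with ω h1 h2
        have : (ℙ[(fun ω => -X (k+1) ω) | ℱ k]) ω = -(ℙ[X (k+1) | ℱ k]) ω := h2
        rw [this]
        nlinarith
      refine le_trans (oneSide ℙ ℱ c hc (fun k ω => -X k ω)
        (fun k => (hadapted k).neg) (fun k => by filter_upwards [hbdd k] with ω h; simpa using h)
        (fun k ω => -(S k ω)) (fun k ω => by show -(S k ω) = _; rw [hS k ω]; simp) hmr' l t hl0.le hlc1 n) ?_
      exact ENNReal.ofReal_le_ofReal hBound
    have hsub : {ω | t < |S n ω|} ⊆ {ω | t ≤ S n ω} ∪ {ω | t ≤ -(S n ω)} := by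
      intro ω hω
      simp only [Set.mem_setOf_eq, Set.mem_union] at hω ⊢
      rcases abs_cases (S n ω) with ⟨h, _⟩ | ⟨h, _⟩
      · left; linarith [h ▸ hω]
      · right; rw [h] at hω; linarith
    calc ℙ {ω | t < |S n ω|} ≤ ℙ ({ω | t ≤ S n ω} ∪ {ω | t ≤ -(S n ω)}) := measure_mono hsub
      _ ≤ ℙ {ω | t ≤ S n ω} + ℙ {ω | t ≤ -(S n ω)} := measure_union_le _ _
      _ ≤ ENNReal.ofReal (δ/2) + ENNReal.ofReal (δ/2) := add_le_add hP1 hP2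
      _ = ENNReal.ofReal δ := by
          rw [← ENNReal.ofReal_add (by linarith) (by linarith)]
          norm_num
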